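/- arXiv:1801.07609 — 2 statements merged into one kernel-verified Lean document; each statement's English description precedes it below -/
import Mathlib

section
/- For any y ∈ ℝⁿ, T_{-y} ∘ T_y is the identity map on ℝⁿ; in particular T_y is a bijection with inverse T_{-y}. -/
noncomputable def arcosh (t : ℝ) : ℝ := Real.log (t + Real.sqrt (t ^ 2 - 1))

noncomputable def br {n : ℕ} (x : EuclideanSpace ℝ (Fin n)) : ℝ :=
  Real.sqrt (1 + ‖x‖ ^ 2)

noncomputable def dh {n : ℕ} (x y : EuclideanSpace ℝ (Fin n)) : ℝ :=
  arcosh (br x * br y - inner ℝ x y)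

noncomputable def T {n : ℕ} (y x : EuclideanSpace ℝ (Fin n)) : EuclideanSpace ℝ (Fin n) :=
  x + (br x + inner ℝ x y / (br y + 1)) • y

lemma br_sq {n : ℕ} (x : EuclideanSpace ℝ (Fin n)) : br x ^ 2 = 1 + ‖x‖ ^ 2 :=
  Real.sq_sqrt (by positivity)

lemma one_le_br {n : ℕ} (x : EuclideanSpace ℝ (Fin n)) : 1 ≤ br x := by
  rw [br]
  calc (1:ℝ) = Real.sqrt 1 := Real.sqrt_one.symm
    _ ≤ _ := Real.sqrt_le_sqrt (by nlinarith [sq_nonneg ‖x‖])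

lemma br_neg {n : ℕ} (y : EuclideanSpace ℝ (Fin n)) : br (-y) = br y := by
  simp [br]

lemma br_T {n : ℕ} (y x : EuclideanSpace ℝ (Fin n)) :
    br (T y x) = br x * br y + inner ℝ x y := by
  set a := br x with ha
  set c := br y with hc
  set s : ℝ := inner ℝ x y with hs
  have ha2 : a ^ 2 = 1 + ‖x‖ ^ 2 := br_sq x
  have hc2 : c ^ 2 = 1 + ‖y‖ ^ 2 := br_sq y
  have ha1 : 1 ≤ a := one_le_br x
  have hc1 : 1 ≤ c := one_le_br y
  have hcne : c + 1 ≠ 0 := by linarith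
  have habs : |s| ≤ ‖x‖ * ‖y‖ := abs_real_inner_le_norm x y
  have hxn : ‖x‖ ^ 2 = a ^ 2 - 1 := by linarith
  have hyn : ‖y‖ ^ 2 = c ^ 2 - 1 := by linarith
  set l : ℝ := a + s / (c + 1) with hl
  have hnorm : ‖T y x‖ ^ 2 = ‖x‖ ^ 2 + 2 * (l * s) + l ^ 2 * ‖y‖ ^ 2 := by
    rw [T, ← ha, ← hc, ← hs, ← hl]
    rw [@norm_add_sq_real, real_inner_smul_right, norm_smul]
    ring_nf
    rw [Real.norm_eq_abs, sq_abs]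
  have hkey : 1 + ‖T y x‖ ^ 2 = (a * c + s) ^ 2 := by
    rw [hnorm, hxn, hyn, hl]
    field_simp
    ring
  have hpos : 0 ≤ a * c + s := by
    have h1 : ‖x‖ * ‖y‖ < a * c := by
      have hxnn : 0 ≤ ‖x‖ := norm_nonneg x
      have hynn : 0 ≤ ‖y‖ := norm_nonneg y
      have hacpos : 0 < a * c := by nlinarith
      have hsq : (‖x‖ * ‖y‖) ^ 2 < (a * c) ^ 2 := by nlinarith [sq_nonneg ‖x‖, sq_nonneg ‖y‖]
      nlinarith [mul_nonneg hxnn hynn]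
    have h2 : -s ≤ ‖x‖ * ‖y‖ := by
      have := neg_abs_le s; linarith [abs_nonneg s, habs]
    linarith
  rw [br, hkey, Real.sqrt_sq hpos]

lemma T_inv {n : ℕ} (y x : EuclideanSpace ℝ (Fin n)) : T (-y) (T y x) = x := by
  set a := br x with ha
  set c := br y with hc
  set s : ℝ := inner ℝ x y with hs
  have hc2 : c ^ 2 = 1 + ‖y‖ ^ 2 := br_sq y
  have hc1 : 1 ≤ c := one_le_br y
  have hcne : c + 1 ≠ 0 := by linarith
  set l : ℝ := a + s / (c + 1) with hl
  have hTx : T y x = x + l • y := by rw [T, ← ha, ← hc, ← hs, ← hl]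
  have hinner : (inner ℝ (T y x) (-y) : ℝ) = -(s + l * ‖y‖ ^ 2) := by
    rw [hTx, inner_neg_right, inner_add_left, real_inner_smul_left,
      real_inner_self_eq_norm_sq, ← hs]
  have hbrT : br (T y x) = a * c + s := br_T y x
  have hcoef : br (T y x) + (inner ℝ (T y x) (-y) : ℝ) / (br (-y) + 1) = l := by
    rw [hbrT, hinner, br_neg, ← hc, hl]
    have hyn : ‖y‖ ^ 2 = c ^ 2 - 1 := by linarith
    rw [hyn]
    field_simp
    ring
  rw [T, hcoef, hTx, smul_neg]
  abel

theorem T_neg_comp_T {n : ℕ} (y : EuclideanSpace ℝ (Fin n)) :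
    T (-y) ∘ T y = id ∧ T y ∘ T (-y) = id ∧ Function.Bijective (T y) := by
  have h1 : T (-y) ∘ T y = id := by
    funext x; exact T_inv y x
  have h2 : T y ∘ T (-y) = id := by
    funext x
    have := T_inv (-y) x
    rwa [neg_neg] at this
  refine ⟨h1, h2, ?_⟩
  exact Function.bijective_iff_has_inverse.mpr
    ⟨T (-y), fun x => T_inv y x, fun x => by simpa [neg_neg] using T_inv (-y) x⟩
end

section
/- Every isometry of (ℝⁿ, d_h) fixing the origin is the restriction of an orthogonal linear map of ℝⁿ, and conversely every orthogonal linear map of ℝⁿ is an isometry of (ℝⁿ, d_h). -/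
lemma arcosh_fix (t : ℝ) (ht : 1 ≤ t) :
    (Real.exp (arcosh t) + Real.exp (-(arcosh t))) / 2 = t := by
  have h1 : (0:ℝ) ≤ t ^ 2 - 1 := by nlinarith
  have hs : Real.sqrt (t ^ 2 - 1) ^ 2 = t ^ 2 - 1 := Real.sq_sqrt h1
  have hs0 : 0 ≤ Real.sqrt (t ^ 2 - 1) := Real.sqrt_nonneg _
  have hpos : 0 < t + Real.sqrt (t ^ 2 - 1) := by nlinarith
  have he : Real.exp (arcosh t) = t + Real.sqrt (t ^ 2 - 1) := Real.exp_log hpos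
  have he' : Real.exp (-(arcosh t)) = t - Real.sqrt (t ^ 2 - 1) := by
    have hmul : (t + Real.sqrt (t ^ 2 - 1)) * (t - Real.sqrt (t ^ 2 - 1)) = 1 := by
      linear_combination -hs
    rw [Real.exp_neg, he]
    exact inv_eq_of_mul_eq_one_right hmul
  rw [he, he']; ring

lemma arcosh_inj {a b : ℝ} (ha : 1 ≤ a) (hb : 1 ≤ b) (h : arcosh a = arcosh b) : a = b := by
  rw [← arcosh_fix a ha, ← arcosh_fix b hb, h]

lemma one_le_dharg {n : ℕ} (x y : EuclideanSpace ℝ (Fin n)) :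
    1 ≤ br x * br y - inner ℝ x y := by
  have hi : (inner ℝ x y : ℝ) ≤ ‖x‖ * ‖y‖ := real_inner_le_norm x y
  have hx0 : (0:ℝ) ≤ ‖x‖ := norm_nonneg _
  have hy0 : (0:ℝ) ≤ ‖y‖ := norm_nonneg _
  have h1 : (1 + ‖x‖ * ‖y‖) ^ 2 ≤ (1 + ‖x‖ ^ 2) * (1 + ‖y‖ ^ 2) := by
    nlinarith [sq_nonneg (‖x‖ - ‖y‖)]
  have h2 : 1 + ‖x‖ * ‖y‖ ≤ br x * br y := by
    rw [br, br, ← Real.sqrt_mul (by positivity)]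
    exact (Real.le_sqrt (by positivity) (by positivity)).mpr h1
  linarith

theorem dh_isometry_fixing_zero_orthogonal {n : ℕ} :
    (∀ u : EuclideanSpace ℝ (Fin n) → EuclideanSpace ℝ (Fin n),
      Function.Bijective u → (∀ x y, dh (u x) (u y) = dh x y) → u 0 = 0 →
      ∃ U : EuclideanSpace ℝ (Fin n) ≃ₗᵢ[ℝ] EuclideanSpace ℝ (Fin n), ∀ x, u x = U x) ∧
    (∀ U : EuclideanSpace ℝ (Fin n) ≃ₗᵢ[ℝ] EuclideanSpace ℝ (Fin n),
      ∀ x y, dh (U x) (U y) = dh x y) := by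
  constructor
  · intro u hb hdh h0
    have hk : ∀ x y, br (u x) * br (u y) - (inner ℝ (u x) (u y) : ℝ)
        = br x * br y - inner ℝ x y := fun x y =>
      arcosh_inj (one_le_dharg _ _) (one_le_dharg _ _) (hdh x y)
    have hbr : ∀ x, br (u x) = br x := by
      intro x
      have := hk x 0
      rw [h0] at this
      simpa [br, inner_zero_right] using this
    have hnorm : ∀ x, ‖u x‖ = ‖x‖ := by
      intro x
      have h := hbr x
      have h1 : (1 + ‖u x‖ ^ 2) = 1 + ‖x‖ ^ 2 := by
        have := congrArg (· ^ 2) h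
        simpa [br, Real.sq_sqrt, add_nonneg, (by positivity : (0:ℝ) ≤ 1 + ‖u x‖ ^ 2),
          (by positivity : (0:ℝ) ≤ 1 + ‖x‖ ^ 2)] using this
      nlinarith [norm_nonneg (u x), norm_nonneg x]
    have hinner : ∀ x y, (inner ℝ (u x) (u y) : ℝ) = inner ℝ x y := by
      intro x y
      have := hk x y
      rw [hbr x, hbr y] at this
      linarith
    have hdist : ∀ x y, dist (u x) (u y) = dist x y := by
      intro x y
      rw [dist_eq_norm, dist_eq_norm]
      have h1 : ‖u x - u y‖ ^ 2 = ‖x - y‖ ^ 2 := by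
        rw [norm_sub_sq_real, norm_sub_sq_real, hnorm, hnorm, hinner]
      nlinarith [norm_nonneg (u x - u y), norm_nonneg (x - y)]
    let e : EuclideanSpace ℝ (Fin n) ≃ᵢ EuclideanSpace ℝ (Fin n) :=
      ⟨Equiv.ofBijective u hb, Isometry.of_dist_eq hdist⟩
    have he0 : e 0 = 0 := h0
    exact ⟨e.toRealLinearIsometryEquivOfMapZero he0, fun x => rfl⟩
  · intro U x y
    simp [dh, br, U.norm_map, U.inner_map_map]
end
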